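/- Let m ≥ 7 be odd and let σ_{ij}, for 1 ≤ i < j ≤ 4, be six permutations of {1,…,m}. Then the number of tuples (x₁,x₂,x₃,x₄) ∈ {1,…,m}⁴ satisfying x_j ≠ σ_{ij}(x_i) for all 1 ≤ i < j ≤ 4 is at most m⁴ − 6m³ + 15m² − 13m − 3. -/

import Mathlib

open Finset Equiv

variable {m : ℕ}

/-- fixed-point count of a permutation, as an integer-valued sum. -/
private def fpc (π : Equiv.Perm (Fin m)) : ℤ := ∑ x : Fin m, if π x = x then 1 else 0

private lemma fpc_nonneg (π : Equiv.Perm (Fin m)) : 0 ≤ fpc π := by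
  refine Finset.sum_nonneg fun x _ => ?_
  split <;> norm_num

private lemma fpc_le (π : Equiv.Perm (Fin m)) : fpc π ≤ m := by
  calc fpc π ≤ ∑ _x : Fin m, (1:ℤ) := by
        refine Finset.sum_le_sum fun x _ => ?_
        split <;> norm_num
    _ = m := by simp

private lemma fpc_eq_card (π : Equiv.Perm (Fin m)) :
    fpc π = ((Finset.univ.filter fun x => π x = x).card : ℤ) := by
  rw [fpc, Finset.sum_boole]

private lemma fpc_support (π : Equiv.Perm (Fin m)) :
    fpc π = (m : ℤ) - (π.support.card : ℤ) := by
  rw [fpc_eq_card]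
  have h := Finset.card_filter_add_card_filter_not
    (s := (Finset.univ : Finset (Fin m))) (p := fun x => π x = x)
  have hs : Finset.univ.filter (fun x => ¬ π x = x) = π.support := by
    ext x; simp [Equiv.Perm.mem_support]
  rw [hs, Finset.card_univ, Fintype.card_fin] at h
  omega

private lemma fpc_one : fpc (1 : Equiv.Perm (Fin m)) = m := by
  simp [fpc]

private lemma fpc_ne_one {π : Equiv.Perm (Fin m)} (h : π ≠ 1) : fpc π ≤ (m:ℤ) - 2 := by
  have := Equiv.Perm.one_lt_card_support_of_ne_one h
  rw [fpc_support]; omega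

/-- key parity fact: if `m` is odd and `α` has no fixed point, then `α²` fixes at most `m-3`
points. -/
private lemma fpc_sq (hodd : Odd m) {α : Equiv.Perm (Fin m)} (hα : ∀ x, α x ≠ x) :
    fpc (α * α) ≤ (m:ℤ) - 3 := by
  have hcard : fpc (α * α) = ((Finset.univ.filter fun x => α (α x) = x).card : ℤ) := by
    rw [fpc_eq_card]; simp [Equiv.Perm.mul_apply]; rfl
  set T := Finset.univ.filter fun x : Fin m => α (α x) = x with hT
  -- T.card is even
  have hmemT : ∀ x ∈ T, α (α x) = x := by intro x hx; simpa [hT] using hx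
  have heven : ((T.card : ℕ) : ZMod 2) = 0 := by
    have : ∑ _x ∈ T, (1 : ZMod 2) = 0 := by
      refine Finset.sum_involution (fun a _ => α a) (fun a ha => by decide)
        (fun a ha h => hα a) (fun a ha => ?_) (fun a ha => hmemT a ha)
      have := hmemT a ha
      simp [hT, this]
    simpa using this
  have heven' : 2 ∣ T.card := by
    exact (ZMod.natCast_eq_zero_iff _ 2).mp heven
  -- support of α² has card  m - T.card, and is ≠ 1
  have hsupp : (α * α).support.card = m - T.card := by
    have h := Finset.card_filter_add_card_filter_not
      (s := (Finset.univ : Finset (Fin m))) (p := fun x => α (α x) = x)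
    have hs : Finset.univ.filter (fun x => ¬ α (α x) = x) = (α * α).support := by
      ext x; simp [Equiv.Perm.mem_support, Equiv.Perm.mul_apply]
    rw [hs, Finset.card_univ, Fintype.card_fin, ← hT] at h
    omega
  have hne1 : (α * α).support.card ≠ 1 := Equiv.Perm.card_support_ne_one _
  have hTle : T.card ≤ m := by
    calc T.card ≤ (Finset.univ : Finset (Fin m)).card := Finset.card_le_card (by simp [hT])
      _ = m := by simp
  obtain ⟨k, hk⟩ := hodd
  obtain ⟨j, hj⟩ := heven'
  rw [hcard]
  have h3 : T.card + 3 ≤ m := by omega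
  have : (T.card : ℤ) + 3 ≤ (m : ℤ) := by exact_mod_cast h3
  omega

private lemma fpf_of_fpc_zero {π : Equiv.Perm (Fin m)} (h : fpc π = 0) : ∀ x, π x ≠ x := by
  intro x hx
  have h1 : (1:ℤ) ≤ fpc π := by
    rw [fpc]
    have := Finset.single_le_sum (f := fun y : Fin m => if π y = y then (1:ℤ) else 0)
      (fun i _ => by split <;> norm_num) (Finset.mem_univ x)
    simpa [hx] using this
  omega

private lemma key_ineq (hm : 7 ≤ m) (hodd : Odd m) (α β γ : Equiv.Perm (Fin m)) :
    fpc (β⁻¹ * α) + fpc (α * γ) + fpc (γ⁻¹ * β)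
      ≤ 3*(m:ℤ) - 3 + ((m:ℤ)-3) * (fpc α + fpc β + fpc γ) := by
  have hm7 : (7:ℤ) ≤ (m:ℤ) := by exact_mod_cast hm
  by_cases hz : fpc α = 0 ∧ fpc β = 0 ∧ fpc γ = 0
  · obtain ⟨hza, hzb, hzc⟩ := hz
    have hfa : ∀ x, α x ≠ x := fpf_of_fpc_zero hza
    rw [hza, hzb, hzc]
    by_cases hu : β⁻¹ * α = 1 <;> by_cases hv : α * γ = 1 <;> by_cases hw : γ⁻¹ * β = 1
    -- case: u = 1, v = 1 (w arbitrary)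
    · have hab : β = α := by rwa [inv_mul_eq_one] at hu
      have hg : γ = α⁻¹ := by rwa [mul_eq_one_iff_inv_eq, eq_comm] at hv
      have hww : γ⁻¹ * β = α * α := by rw [hab, hg, inv_inv]
      rw [hu, hv, hww, fpc_one]
      have := fpc_sq hodd hfa
      linarith
    · have hab : β = α := by rwa [inv_mul_eq_one] at hu
      have hg : γ = α⁻¹ := by rwa [mul_eq_one_iff_inv_eq, eq_comm] at hv
      have hww : γ⁻¹ * β = α * α := by rw [hab, hg, inv_inv]
      rw [hu, hv, hww, fpc_one]
      have := fpc_sq hodd hfa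
      linarith
    -- case: u = 1, w = 1 (¬v)
    · have hab : β = α := by rwa [inv_mul_eq_one] at hu
      have hgb : γ = β := by rwa [inv_mul_eq_one] at hw
      have hvv : α * γ = α * α := by rw [hgb, hab]
      rw [hu, hw, hvv, fpc_one]
      have := fpc_sq hodd hfa
      linarith
    -- case: u = 1 only
    · have h2 := fpc_ne_one hv
      have h3 := fpc_ne_one hw
      rw [hu, fpc_one]
      linarith
    -- case: v = 1, w = 1
    · have hg : γ = α⁻¹ := by rwa [mul_eq_one_iff_inv_eq, eq_comm] at hv
      have hgb : β = γ := by rwa [inv_mul_eq_one, eq_comm] at hw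
      have huu : β⁻¹ * α = α * α := by rw [hgb, hg, inv_inv]
      rw [hv, hw, huu, fpc_one]
      have := fpc_sq hodd hfa
      linarith
    -- case: v = 1 only
    · have h1 := fpc_ne_one hu
      have h3 := fpc_ne_one hw
      rw [hv, fpc_one]
      linarith
    -- case: w = 1 only
    · have h1 := fpc_ne_one hu
      have h2 := fpc_ne_one hv
      rw [hw, fpc_one]
      linarith
    -- case: none
    · have h1 := fpc_ne_one hu
      have h2 := fpc_ne_one hv
      have h3 := fpc_ne_one hw
      linarith
  · have ha := fpc_nonneg α
    have hb := fpc_nonneg β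
    have hc := fpc_nonneg γ
    have hs1 : 1 ≤ fpc α + fpc β + fpc γ := by omega
    have hL1 := fpc_le (β⁻¹ * α)
    have hL2 := fpc_le (α * γ)
    have hL3 := fpc_le (γ⁻¹ * β)
    have h4 : ((m:ℤ)-3) * 1 ≤ ((m:ℤ)-3) * (fpc α + fpc β + fpc γ) :=
      mul_le_mul_of_nonneg_left hs1 (by linarith)
    linarith

/-- pointwise indicator for membership in a 1-element forbidden set -/
private lemma sum_ite_force (u : Fin m) (f : Fin m → ℤ) :
    ∑ x : Fin m, (if u = x then f x else 0) = f u := by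
  simp

private lemma sum_ite_ne (u : Fin m) :
    ∑ x : Fin m, (if ¬ x = u then (1:ℤ) else 0) = (m:ℤ) - 1 := by
  have hpt : ∀ x : Fin m, (if ¬ x = u then (1:ℤ) else 0)
      = 1 - (if x = u then (1:ℤ) else 0) := by
    intro x; by_cases h : x = u <;> simp [h]
  rw [Finset.sum_congr rfl fun x _ => hpt x, Finset.sum_sub_distrib]
  simp

private lemma sum_ite_ne_ne (u v : Fin m) :
    ∑ x : Fin m, (if ¬ x = u ∧ ¬ x = v then (1:ℤ) else 0)
      = (m:ℤ) - 2 + (if u = v then 1 else 0) := by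
  have hpt : ∀ x : Fin m, (if ¬ x = u ∧ ¬ x = v then (1:ℤ) else 0)
      = 1 - (if x = u then (1:ℤ) else 0) - (if x = v then 1 else 0)
        + (if x = u then (if x = v then (1:ℤ) else 0) else 0) := by
    intro x; by_cases h1 : x = u <;> by_cases h2 : x = v <;> simp [h1, h2]
  rw [Finset.sum_congr rfl fun x _ => hpt x]
  rw [Finset.sum_add_distrib, Finset.sum_sub_distrib, Finset.sum_sub_distrib]
  have e1 : ∑ x : Fin m, (if x = u then (if x = v then (1:ℤ) else 0) else 0)
      = (if u = v then (1:ℤ) else 0) := by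
    rw [Finset.sum_ite_eq' Finset.univ u (fun x => if x = v then (1:ℤ) else 0)]; simp
  rw [e1]
  simp [Finset.sum_ite_eq' Finset.univ u, Finset.sum_ite_eq' Finset.univ v]
  ring

private lemma sum_ite_ne_ne_ne (u v w : Fin m) :
    ∑ x : Fin m, (if ¬ x = u ∧ ¬ x = v ∧ ¬ x = w then (1:ℤ) else 0)
      = (m:ℤ) - 3 + (if u = v then 1 else 0) + (if u = w then 1 else 0)
        + (if v = w then 1 else 0) - (if u = v ∧ u = w then 1 else 0) := by
  have hc : ∑ x : Fin m, (if ¬ x = u ∧ ¬ x = v ∧ ¬ x = w then (1:ℤ) else 0)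
      = (m:ℤ) - (({u,v,w} : Finset (Fin m)).card : ℤ) := by
    rw [Finset.sum_boole]
    have hfl : Finset.univ.filter (fun x : Fin m => ¬ x = u ∧ ¬ x = v ∧ ¬ x = w)
        = ({u,v,w} : Finset (Fin m))ᶜ := by
      ext x; simp [not_or]
    rw [hfl, Finset.card_compl, Fintype.card_fin]
    have hle : ({u,v,w} : Finset (Fin m)).card ≤ m := by
      calc ({u,v,w} : Finset (Fin m)).card ≤ (Finset.univ : Finset (Fin m)).card :=
            Finset.card_le_univ _
        _ = m := by simp
    push_cast [Nat.cast_sub hle]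
    ring
  rw [hc]
  by_cases huv : u = v <;> by_cases huw : u = w <;> by_cases hvw : v = w
  · subst huv; subst huw; simp; ring
  · exact absurd (huv.symm.trans huw) hvw
  · exact absurd (huv ▸ hvw : u = w) huw
  · -- u = v, u ≠ w, v ≠ w
    subst huv
    have h2 : ({u,u,w} : Finset (Fin m)) = {u,w} := by ext x; simp
    rw [h2, Finset.card_pair huw]
    simp [huw, hvw]; ring
  · exact absurd (huw.trans hvw.symm) huv
  · -- u = w, u ≠ v
    subst huw
    have h2 : ({u,v,u} : Finset (Fin m)) = {u,v} := by
      ext x; simp; tauto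
    rw [h2, Finset.card_pair huv]
    simp [huv, hvw]; ring
  · -- v = w, u ≠ v, u ≠ w
    subst hvw
    have h2 : ({u,v,v} : Finset (Fin m)) = {u,v} := by ext x; simp
    rw [h2, Finset.card_pair huv]
    simp [huv, huw]; ring
  · -- all distinct
    have h2 : ({u,v,w} : Finset (Fin m)).card = 3 := by
      rw [Finset.card_insert_of_notMem (by simp [huv, huw]),
        Finset.card_insert_of_notMem (by simp [hvw]), Finset.card_singleton]
    rw [h2]
    simp [huv, huw, hvw]

private lemma sum_ite_ne_flip (π : Equiv.Perm (Fin m)) :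
    ∑ x : Fin m, (if ¬ x = π x then (1:ℤ) else 0) = (m:ℤ) - fpc π := by
  have hpt : ∀ x : Fin m, (if ¬ x = π x then (1:ℤ) else 0)
      = 1 - (if π x = x then (1:ℤ) else 0) := by
    intro x; by_cases h : π x = x
    · simp [h]
    · have h' : ¬ x = π x := fun hh => h hh.symm
      rw [if_pos h', if_neg h]; norm_num
  rw [Finset.sum_congr rfl fun x _ => hpt x, Finset.sum_sub_distrib]
  simp [fpc]

private lemma fpc_inv (π : Equiv.Perm (Fin m)) : fpc π⁻¹ = fpc π := by
  simp only [fpc]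
  refine Finset.sum_congr rfl fun x _ => if_congr ?_ rfl rfl
  rw [Equiv.Perm.inv_eq_iff_eq]
  exact eq_comm

private lemma sum_ite_eq_perm (τ π : Equiv.Perm (Fin m)) :
    ∑ x : Fin m, (if τ x = π x then (1:ℤ) else 0) = fpc (τ⁻¹ * π) := by
  simp only [fpc]
  refine Finset.sum_congr rfl fun x _ => if_congr ?_ rfl rfl
  rw [Equiv.Perm.mul_apply, Equiv.Perm.inv_eq_iff_eq]
  exact eq_comm

private lemma sum_ite_const {P : Prop} [Decidable P] (f : Fin m → ℤ) :
    (∑ x : Fin m, if P then f x else 0) = if P then (∑ x : Fin m, f x) else 0 := by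
  by_cases h : P <;> simp [h]

private lemma sum_ite_not (p : Fin m → Prop) [DecidablePred p] :
    ∑ x : Fin m, (if ¬ p x then (1:ℤ) else 0)
      = (m:ℤ) - ∑ x : Fin m, (if p x then (1:ℤ) else 0) := by
  have hpt : ∀ x, (if ¬ p x then (1:ℤ) else 0) = 1 - (if p x then 1 else 0) := by
    intro x; by_cases h : p x <;> simp [h]
  rw [Finset.sum_congr rfl fun x _ => hpt x, Finset.sum_sub_distrib]
  simp

private lemma reduced_bound (hm : 7 ≤ m) (hodd : Odd m) (α β γ : Equiv.Perm (Fin m)) :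
    (∑ a : Fin m, ∑ b : Fin m, ∑ c : Fin m, ∑ d : Fin m,
      if ¬b=a ∧ ¬c=a ∧ ¬d=a ∧ ¬c=α b ∧ ¬d=β b ∧ ¬d=γ c then (1:ℤ) else 0)
      ≤ (m : ℤ)^4 - 6*(m:ℤ)^3 + 15*(m:ℤ)^2 - 13*(m:ℤ) - 3 := by
  have hmz : (7:ℤ) ≤ (m:ℤ) := by exact_mod_cast hm
  -- Step 1: sum out d
  have hd : ∀ a b c : Fin m,
      (∑ d : Fin m, if ¬b=a ∧ ¬c=a ∧ ¬d=a ∧ ¬c=α b ∧ ¬d=β b ∧ ¬d=γ c then (1:ℤ) else 0)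
      = (if ¬b=a ∧ ¬c=a ∧ ¬c=α b then
          ((m:ℤ) - 3 + (if a = β b then 1 else 0) + (if a = γ c then 1 else 0)
            + (if β b = γ c then 1 else 0) - (if a = β b ∧ a = γ c then 1 else 0)) else 0) := by
    intro a b c
    by_cases h : ¬b=a ∧ ¬c=a ∧ ¬c=α b
    · rw [if_pos h]
      have hcg : ∀ d : Fin m,
          (if ¬b=a ∧ ¬c=a ∧ ¬d=a ∧ ¬c=α b ∧ ¬d=β b ∧ ¬d=γ c then (1:ℤ) else 0)
          = (if ¬d=a ∧ ¬d=β b ∧ ¬d=γ c then (1:ℤ) else 0) :=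
        fun d => if_congr (by tauto) rfl rfl
      rw [Finset.sum_congr rfl fun d _ => hcg d, sum_ite_ne_ne_ne]
    · rw [if_neg h]
      exact Finset.sum_eq_zero fun d _ => if_neg (by tauto)
  -- Step 2: pointwise split
  have hsplit : ∀ a b c : Fin m,
      (if ¬b=a ∧ ¬c=a ∧ ¬c=α b then
          ((m:ℤ) - 3 + (if a = β b then 1 else 0) + (if a = γ c then 1 else 0)
            + (if β b = γ c then 1 else 0) - (if a = β b ∧ a = γ c then 1 else 0)) else 0)
      = ((m:ℤ)-3) * (if ¬b=a ∧ ¬c=a ∧ ¬c=α b then (1:ℤ) else 0)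
        + (if (¬b=a ∧ ¬c=a ∧ ¬c=α b) ∧ a = β b then (1:ℤ) else 0)
        + (if (¬b=a ∧ ¬c=a ∧ ¬c=α b) ∧ a = γ c then (1:ℤ) else 0)
        + (if (¬b=a ∧ ¬c=a ∧ ¬c=α b) ∧ β b = γ c then (1:ℤ) else 0)
        - (if (¬b=a ∧ ¬c=a ∧ ¬c=α b) ∧ (a = β b ∧ a = γ c) then (1:ℤ) else 0) := by
    intro a b c
    by_cases hC : ¬b=a ∧ ¬c=a ∧ ¬c=α b
    · rw [if_pos hC, if_pos hC,
        if_congr (and_iff_right hC) rfl rfl, if_congr (and_iff_right hC) rfl rfl,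
        if_congr (and_iff_right hC) rfl rfl, if_congr (and_iff_right hC) rfl rfl]
      ring
    · rw [if_neg hC, if_neg hC,
        if_neg (fun h => hC h.1), if_neg (fun h => hC h.1),
        if_neg (fun h => hC h.1), if_neg (fun h => hC h.1)]
      ring
  -- Step 3: total splits into five triple sums
  have htot : (∑ a : Fin m, ∑ b : Fin m, ∑ c : Fin m, ∑ d : Fin m,
      if ¬b=a ∧ ¬c=a ∧ ¬d=a ∧ ¬c=α b ∧ ¬d=β b ∧ ¬d=γ c then (1:ℤ) else 0)
      = ((m:ℤ)-3) * (∑ a : Fin m, ∑ b : Fin m, ∑ c : Fin m,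
            if ¬b=a ∧ ¬c=a ∧ ¬c=α b then (1:ℤ) else 0)
        + (∑ a : Fin m, ∑ b : Fin m, ∑ c : Fin m,
            if (¬b=a ∧ ¬c=a ∧ ¬c=α b) ∧ a = β b then (1:ℤ) else 0)
        + (∑ a : Fin m, ∑ b : Fin m, ∑ c : Fin m,
            if (¬b=a ∧ ¬c=a ∧ ¬c=α b) ∧ a = γ c then (1:ℤ) else 0)
        + (∑ a : Fin m, ∑ b : Fin m, ∑ c : Fin m,
            if (¬b=a ∧ ¬c=a ∧ ¬c=α b) ∧ β b = γ c then (1:ℤ) else 0)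
        - (∑ a : Fin m, ∑ b : Fin m, ∑ c : Fin m,
            if (¬b=a ∧ ¬c=a ∧ ¬c=α b) ∧ (a = β b ∧ a = γ c) then (1:ℤ) else 0) := by
    rw [Finset.sum_congr rfl fun a _ => Finset.sum_congr rfl fun b _ =>
      Finset.sum_congr rfl fun c _ => (hd a b c).trans (hsplit a b c)]
    simp only [Finset.sum_add_distrib, Finset.sum_sub_distrib, ← Finset.mul_sum]
  -- S0 computation
  have hS0 : (∑ a : Fin m, ∑ b : Fin m, ∑ c : Fin m,
      if ¬b=a ∧ ¬c=a ∧ ¬c=α b then (1:ℤ) else 0)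
      = ((m:ℤ)-2) * ((m:ℤ) * ((m:ℤ)-1)) + ((m:ℤ) - fpc α) := by
    have h1 : ∀ a b : Fin m, (∑ c : Fin m, if ¬b=a ∧ ¬c=a ∧ ¬c=α b then (1:ℤ) else 0)
        = (if ¬b=a then ((m:ℤ)-2 + (if a = α b then 1 else 0)) else 0) := by
      intro a b
      by_cases h : b = a
      · rw [if_neg (not_not_intro h)]
        exact Finset.sum_eq_zero fun c _ => if_neg (by tauto)
      · rw [if_pos h]
        have hcg : ∀ c : Fin m, (if ¬b=a ∧ ¬c=a ∧ ¬c=α b then (1:ℤ) else 0)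
            = (if ¬c=a ∧ ¬c=α b then (1:ℤ) else 0) := fun c => if_congr (by tauto) rfl rfl
        rw [Finset.sum_congr rfl fun c _ => hcg c, sum_ite_ne_ne]
    have h2 : ∀ a b : Fin m, (if ¬b=a then ((m:ℤ)-2 + (if a = α b then 1 else 0)) else 0)
        = ((m:ℤ)-2) * (if ¬b=a then (1:ℤ) else 0)
          + (if α b = a then (if ¬b=α b then (1:ℤ) else 0) else 0) := by
      intro a b
      by_cases hb : b = a
      · subst hb
        by_cases h4 : α b = b <;> simp [h4, eq_comm]
      · by_cases h4 : α b = a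
        · subst h4
          simp [hb]
        · have h5 : ¬ a = α b := fun hh => h4 hh.symm
          simp [hb, h4, h5]
    have hs1 : (∑ a : Fin m, ∑ b : Fin m, if ¬b=a then (1:ℤ) else 0) = (m:ℤ)*((m:ℤ)-1) := by
      rw [Finset.sum_congr rfl fun a _ => sum_ite_ne a, Finset.sum_const, Finset.card_univ,
        Fintype.card_fin, nsmul_eq_mul]
    have hs2 : (∑ a : Fin m, ∑ b : Fin m,
        if α b = a then (if ¬b=α b then (1:ℤ) else 0) else 0) = (m:ℤ) - fpc α := by
      rw [Finset.sum_comm]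
      rw [Finset.sum_congr rfl fun b _ =>
        sum_ite_force (α b) (fun _ => if ¬b=α b then (1:ℤ) else 0)]
      exact sum_ite_ne_flip α
    calc (∑ a : Fin m, ∑ b : Fin m, ∑ c : Fin m,
        if ¬b=a ∧ ¬c=a ∧ ¬c=α b then (1:ℤ) else 0)
        = ∑ a : Fin m, ∑ b : Fin m, (((m:ℤ)-2) * (if ¬b=a then (1:ℤ) else 0)
            + (if α b = a then (if ¬b=α b then (1:ℤ) else 0) else 0)) := by
          exact Finset.sum_congr rfl fun a _ => Finset.sum_congr rfl fun b _ =>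
            (h1 a b).trans (h2 a b)
      _ = ((m:ℤ)-2) * (∑ a : Fin m, ∑ b : Fin m, if ¬b=a then (1:ℤ) else 0)
            + (∑ a : Fin m, ∑ b : Fin m,
                if α b = a then (if ¬b=α b then (1:ℤ) else 0) else 0) := by
          simp only [Finset.sum_add_distrib, ← Finset.mul_sum]
      _ = ((m:ℤ)-2) * ((m:ℤ) * ((m:ℤ)-1)) + ((m:ℤ) - fpc α) := by rw [hs1, hs2]
  -- A bound
  have hA : (∑ a : Fin m, ∑ b : Fin m, ∑ c : Fin m,
      if (¬b=a ∧ ¬c=a ∧ ¬c=α b) ∧ a = β b then (1:ℤ) else 0)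
      ≤ ((m:ℤ)-2) * ((m:ℤ) - fpc β) + fpc (β⁻¹ * α) := by
    have h1 : ∀ a b : Fin m, (∑ c : Fin m,
        if (¬b=a ∧ ¬c=a ∧ ¬c=α b) ∧ a = β b then (1:ℤ) else 0)
        = (if β b = a then
            (if ¬b=β b then ((m:ℤ)-2 + (if β b = α b then 1 else 0)) else 0) else 0) := by
      intro a b
      by_cases h4 : β b = a
      · rw [if_pos h4]
        subst h4
        by_cases h : ¬b = β b
        · rw [if_pos h]
          have hcg : ∀ c : Fin m,
              (if (¬b=β b ∧ ¬c=β b ∧ ¬c=α b) ∧ β b = β b then (1:ℤ) else 0)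
              = (if ¬c=β b ∧ ¬c=α b then (1:ℤ) else 0) := fun c => if_congr (by tauto) rfl rfl
          rw [Finset.sum_congr rfl fun c _ => hcg c, sum_ite_ne_ne]
        · rw [if_neg h]
          exact Finset.sum_eq_zero fun c _ => if_neg (by tauto)
      · rw [if_neg h4]
        exact Finset.sum_eq_zero fun c _ => if_neg (fun hh => h4 hh.2.symm)
    have h3 : ∀ b : Fin m,
        (if ¬b=β b then ((m:ℤ)-2 + (if β b = α b then 1 else 0)) else 0)
        ≤ ((m:ℤ)-2) * (if ¬b=β b then (1:ℤ) else 0) + (if β b = α b then (1:ℤ) else 0) := by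
      intro b
      by_cases h : b = β b
      · rw [if_neg (not_not_intro h), if_neg (not_not_intro h), mul_zero, zero_add]
        split <;> norm_num
      · rw [if_pos h, if_pos h, mul_one]
    calc (∑ a : Fin m, ∑ b : Fin m, ∑ c : Fin m,
        if (¬b=a ∧ ¬c=a ∧ ¬c=α b) ∧ a = β b then (1:ℤ) else 0)
        = ∑ b : Fin m, ∑ a : Fin m, ∑ c : Fin m,
            (if (¬b=a ∧ ¬c=a ∧ ¬c=α b) ∧ a = β b then (1:ℤ) else 0) := Finset.sum_comm
      _ = ∑ b : Fin m, (if ¬b=β b then ((m:ℤ)-2 + (if β b = α b then 1 else 0)) else 0) := by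
          refine Finset.sum_congr rfl fun b _ => ?_
          rw [Finset.sum_congr rfl fun a _ => h1 a b]
          exact sum_ite_force (β b) _
      _ ≤ ∑ b : Fin m, (((m:ℤ)-2) * (if ¬b=β b then (1:ℤ) else 0)
            + (if β b = α b then (1:ℤ) else 0)) := Finset.sum_le_sum fun b _ => h3 b
      _ = ((m:ℤ)-2) * (∑ b : Fin m, if ¬b=β b then (1:ℤ) else 0)
            + (∑ b : Fin m, if β b = α b then (1:ℤ) else 0) := by
          simp only [Finset.sum_add_distrib, ← Finset.mul_sum]
      _ = ((m:ℤ)-2) * ((m:ℤ) - fpc β) + fpc (β⁻¹ * α) := by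
          rw [sum_ite_ne_flip β, sum_ite_eq_perm β α]
  -- B bound
  have hB : (∑ a : Fin m, ∑ b : Fin m, ∑ c : Fin m,
      if (¬b=a ∧ ¬c=a ∧ ¬c=α b) ∧ a = γ c then (1:ℤ) else 0)
      ≤ ((m:ℤ)-2) * ((m:ℤ) - fpc γ) + fpc (α * γ) := by
    have h1 : ∀ b c : Fin m, (∑ a : Fin m,
        if (¬b=a ∧ ¬c=a ∧ ¬c=α b) ∧ a = γ c then (1:ℤ) else 0)
        = (if ¬b=γ c ∧ ¬c=γ c ∧ ¬c=α b then (1:ℤ) else 0) := by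
      intro b c
      have hiff : ∀ a : Fin m, (((¬b=a ∧ ¬c=a ∧ ¬c=α b) ∧ a = γ c)
          ↔ (γ c = a ∧ (¬b=γ c ∧ ¬c=γ c ∧ ¬c=α b))) := by
        intro a
        constructor
        · rintro ⟨⟨x1, x2, x3⟩, x4⟩
          subst x4
          exact ⟨rfl, x1, x2, x3⟩
        · rintro ⟨x4, x1, x2, x3⟩
          subst x4
          exact ⟨⟨x1, x2, x3⟩, rfl⟩
      rw [Finset.sum_congr rfl fun a _ =>
        (if_congr (hiff a) rfl rfl).trans (ite_and (γ c = a) _ _ _)]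
      exact sum_ite_force (γ c) _
    have h2 : ∀ c b : Fin m,
        (if ¬b=γ c ∧ ¬c=γ c ∧ ¬c=α b then (1:ℤ) else 0)
        = (if ¬c=γ c then (if ¬b=γ c ∧ ¬b=α⁻¹ c then (1:ℤ) else 0) else 0) := by
      intro c b
      have hiff : (¬b=γ c ∧ ¬c=γ c ∧ ¬c=α b) ↔ (¬c=γ c ∧ (¬b=γ c ∧ ¬b=α⁻¹ c)) := by
        have hv : (c = α b) ↔ (b = α⁻¹ c) := by
          rw [Equiv.Perm.eq_inv_iff_eq]
          exact eq_comm
        constructor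
        · rintro ⟨x1, x2, x3⟩
          exact ⟨x2, x1, fun hh => x3 (hv.mpr hh)⟩
        · rintro ⟨x2, x1, x3⟩
          exact ⟨x1, x2, fun hh => x3 (hv.mp hh)⟩
      rw [if_congr hiff rfl rfl, ite_and]
    have h3 : ∀ c : Fin m,
        (if ¬c=γ c then ((m:ℤ)-2 + (if γ c = α⁻¹ c then 1 else 0)) else 0)
        ≤ ((m:ℤ)-2) * (if ¬c=γ c then (1:ℤ) else 0) + (if γ c = α⁻¹ c then (1:ℤ) else 0) := by
      intro c
      by_cases h : c = γ c
      · rw [if_neg (not_not_intro h), if_neg (not_not_intro h), mul_zero, zero_add]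
        split <;> norm_num
      · rw [if_pos h, if_pos h, mul_one]
    calc (∑ a : Fin m, ∑ b : Fin m, ∑ c : Fin m,
        if (¬b=a ∧ ¬c=a ∧ ¬c=α b) ∧ a = γ c then (1:ℤ) else 0)
        = ∑ b : Fin m, ∑ a : Fin m, ∑ c : Fin m,
            (if (¬b=a ∧ ¬c=a ∧ ¬c=α b) ∧ a = γ c then (1:ℤ) else 0) := Finset.sum_comm
      _ = ∑ b : Fin m, ∑ c : Fin m, ∑ a : Fin m,
            (if (¬b=a ∧ ¬c=a ∧ ¬c=α b) ∧ a = γ c then (1:ℤ) else 0) :=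
          Finset.sum_congr rfl fun b _ => Finset.sum_comm
      _ = ∑ b : Fin m, ∑ c : Fin m, (if ¬b=γ c ∧ ¬c=γ c ∧ ¬c=α b then (1:ℤ) else 0) :=
          Finset.sum_congr rfl fun b _ => Finset.sum_congr rfl fun c _ => h1 b c
      _ = ∑ c : Fin m, ∑ b : Fin m, (if ¬b=γ c ∧ ¬c=γ c ∧ ¬c=α b then (1:ℤ) else 0) :=
          Finset.sum_comm
      _ = ∑ c : Fin m, (if ¬c=γ c then ((m:ℤ)-2 + (if γ c = α⁻¹ c then 1 else 0)) else 0) := by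
          refine Finset.sum_congr rfl fun c _ => ?_
          rw [Finset.sum_congr rfl fun b _ => h2 c b, sum_ite_const, sum_ite_ne_ne]
      _ ≤ ∑ c : Fin m, (((m:ℤ)-2) * (if ¬c=γ c then (1:ℤ) else 0)
            + (if γ c = α⁻¹ c then (1:ℤ) else 0)) := Finset.sum_le_sum fun c _ => h3 c
      _ = ((m:ℤ)-2) * (∑ c : Fin m, if ¬c=γ c then (1:ℤ) else 0)
            + (∑ c : Fin m, if γ c = α⁻¹ c then (1:ℤ) else 0) := by
          simp only [Finset.sum_add_distrib, ← Finset.mul_sum]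
      _ = ((m:ℤ)-2) * ((m:ℤ) - fpc γ) + fpc (α * γ) := by
          rw [sum_ite_ne_flip γ, sum_ite_eq_perm γ α⁻¹]
          congr 1
          rw [← fpc_inv (α * γ), mul_inv_rev]
  -- C3 bound
  have hC3 : (∑ a : Fin m, ∑ b : Fin m, ∑ c : Fin m,
      if (¬b=a ∧ ¬c=a ∧ ¬c=α b) ∧ β b = γ c then (1:ℤ) else 0)
      ≤ ((m:ℤ)-2) * ((m:ℤ) - (∑ b : Fin m, if γ⁻¹ (β b) = α b then (1:ℤ) else 0))
        + fpc (γ⁻¹ * β) := by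
    have h1 : ∀ a b : Fin m, (∑ c : Fin m,
        if (¬b=a ∧ ¬c=a ∧ ¬c=α b) ∧ β b = γ c then (1:ℤ) else 0)
        = (if ¬b=a ∧ ¬γ⁻¹ (β b)=a ∧ ¬γ⁻¹ (β b)=α b then (1:ℤ) else 0) := by
      intro a b
      have hiff : ∀ c : Fin m, (((¬b=a ∧ ¬c=a ∧ ¬c=α b) ∧ β b = γ c)
          ↔ (γ⁻¹ (β b) = c ∧ (¬b=a ∧ ¬γ⁻¹ (β b)=a ∧ ¬γ⁻¹ (β b)=α b))) := by
        intro c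
        constructor
        · rintro ⟨⟨x1, x2, x3⟩, x4⟩
          have hc : γ⁻¹ (β b) = c := by rw [x4]; exact γ.symm_apply_apply c
          subst hc
          exact ⟨rfl, x1, x2, x3⟩
        · rintro ⟨hc, x1, x2, x3⟩
          subst hc
          exact ⟨⟨x1, x2, x3⟩, (γ.apply_symm_apply (β b)).symm⟩
      rw [Finset.sum_congr rfl fun c _ =>
        (if_congr (hiff c) rfl rfl).trans (ite_and (γ⁻¹ (β b) = c) _ _ _)]
      exact sum_ite_force (γ⁻¹ (β b)) _
    have h2 : ∀ b a : Fin m,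
        (if ¬b=a ∧ ¬γ⁻¹ (β b)=a ∧ ¬γ⁻¹ (β b)=α b then (1:ℤ) else 0)
        = (if ¬γ⁻¹ (β b)=α b then (if ¬a=b ∧ ¬a=γ⁻¹ (β b) then (1:ℤ) else 0) else 0) := by
      intro b a
      have hiff : (¬b=a ∧ ¬γ⁻¹ (β b)=a ∧ ¬γ⁻¹ (β b)=α b)
          ↔ (¬γ⁻¹ (β b)=α b ∧ (¬a=b ∧ ¬a=γ⁻¹ (β b))) := by
        constructor
        · rintro ⟨x1, x2, x3⟩
          exact ⟨x3, fun hh => x1 hh.symm, fun hh => x2 hh.symm⟩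
        · rintro ⟨x3, x1, x2⟩
          exact ⟨fun hh => x1 hh.symm, fun hh => x2 hh.symm, x3⟩
      rw [if_congr hiff rfl rfl, ite_and]
    have h3 : ∀ b : Fin m,
        (if ¬γ⁻¹ (β b)=α b then ((m:ℤ)-2 + (if b = γ⁻¹ (β b) then 1 else 0)) else 0)
        ≤ ((m:ℤ)-2) * (if ¬γ⁻¹ (β b)=α b then (1:ℤ) else 0)
          + (if b = γ⁻¹ (β b) then (1:ℤ) else 0) := by
      intro b
      by_cases h : γ⁻¹ (β b) = α b
      · rw [if_neg (not_not_intro h), if_neg (not_not_intro h), mul_zero, zero_add]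
        split <;> norm_num
      · rw [if_pos h, if_pos h, mul_one]
    calc (∑ a : Fin m, ∑ b : Fin m, ∑ c : Fin m,
        if (¬b=a ∧ ¬c=a ∧ ¬c=α b) ∧ β b = γ c then (1:ℤ) else 0)
        = ∑ a : Fin m, ∑ b : Fin m,
            (if ¬b=a ∧ ¬γ⁻¹ (β b)=a ∧ ¬γ⁻¹ (β b)=α b then (1:ℤ) else 0) :=
          Finset.sum_congr rfl fun a _ => Finset.sum_congr rfl fun b _ => h1 a b
      _ = ∑ b : Fin m, ∑ a : Fin m,
            (if ¬b=a ∧ ¬γ⁻¹ (β b)=a ∧ ¬γ⁻¹ (β b)=α b then (1:ℤ) else 0) := Finset.sum_comm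
      _ = ∑ b : Fin m, (if ¬γ⁻¹ (β b)=α b
            then ((m:ℤ)-2 + (if b = γ⁻¹ (β b) then 1 else 0)) else 0) := by
          refine Finset.sum_congr rfl fun b _ => ?_
          rw [Finset.sum_congr rfl fun a _ => h2 b a, sum_ite_const, sum_ite_ne_ne]
      _ ≤ ∑ b : Fin m, (((m:ℤ)-2) * (if ¬γ⁻¹ (β b)=α b then (1:ℤ) else 0)
            + (if b = γ⁻¹ (β b) then (1:ℤ) else 0)) := Finset.sum_le_sum fun b _ => h3 b
      _ = ((m:ℤ)-2) * (∑ b : Fin m, if ¬γ⁻¹ (β b)=α b then (1:ℤ) else 0)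
            + (∑ b : Fin m, if b = γ⁻¹ (β b) then (1:ℤ) else 0) := by
          simp only [Finset.sum_add_distrib, ← Finset.mul_sum]
      _ = ((m:ℤ)-2) * ((m:ℤ) - (∑ b : Fin m, if γ⁻¹ (β b) = α b then (1:ℤ) else 0))
            + fpc (γ⁻¹ * β) := by
          rw [sum_ite_not (fun b => γ⁻¹ (β b) = α b)]
          congr 1
          simp only [fpc]
          refine Finset.sum_congr rfl fun b _ => if_congr ?_ rfl rfl
          rw [Equiv.Perm.mul_apply]
          exact eq_comm
  -- D lower bound
  have hD : (m:ℤ) ≤ (∑ a : Fin m, ∑ b : Fin m, ∑ c : Fin m,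
      if (¬b=a ∧ ¬c=a ∧ ¬c=α b) ∧ (a = β b ∧ a = γ c) then (1:ℤ) else 0)
      + fpc β + fpc γ + (∑ b : Fin m, if γ⁻¹ (β b) = α b then (1:ℤ) else 0) := by
    have h1 : ∀ a b : Fin m, (∑ c : Fin m,
        if (¬b=a ∧ ¬c=a ∧ ¬c=α b) ∧ (a = β b ∧ a = γ c) then (1:ℤ) else 0)
        = (if ¬b=a ∧ ¬γ⁻¹ a=a ∧ ¬γ⁻¹ a=α b ∧ a=β b then (1:ℤ) else 0) := by
      intro a b
      have hiff : ∀ c : Fin m, (((¬b=a ∧ ¬c=a ∧ ¬c=α b) ∧ (a = β b ∧ a = γ c))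
          ↔ (γ⁻¹ a = c ∧ (¬b=a ∧ ¬γ⁻¹ a=a ∧ ¬γ⁻¹ a=α b ∧ a=β b))) := by
        intro c
        constructor
        · rintro ⟨⟨x1, x2, x3⟩, x4, x5⟩
          have hc : γ⁻¹ a = c := by rw [x5]; exact γ.symm_apply_apply c
          subst hc
          exact ⟨rfl, x1, x2, x3, x4⟩
        · rintro ⟨hc, x1, x2, x3, x4⟩
          subst hc
          exact ⟨⟨x1, x2, x3⟩, x4, (γ.apply_symm_apply a).symm⟩
      rw [Finset.sum_congr rfl fun c _ =>
        (if_congr (hiff c) rfl rfl).trans (ite_and (γ⁻¹ a = c) _ _ _)]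
      exact sum_ite_force (γ⁻¹ a) _
    have h2 : ∀ b : Fin m, (∑ a : Fin m,
        if ¬b=a ∧ ¬γ⁻¹ a=a ∧ ¬γ⁻¹ a=α b ∧ a=β b then (1:ℤ) else 0)
        = (if ¬b=β b ∧ ¬γ⁻¹ (β b)=β b ∧ ¬γ⁻¹ (β b)=α b then (1:ℤ) else 0) := by
      intro b
      have hiff : ∀ a : Fin m, ((¬b=a ∧ ¬γ⁻¹ a=a ∧ ¬γ⁻¹ a=α b ∧ a=β b)
          ↔ (β b = a ∧ (¬b=β b ∧ ¬γ⁻¹ (β b)=β b ∧ ¬γ⁻¹ (β b)=α b))) := by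
        intro a
        constructor
        · rintro ⟨x1, x2, x3, x4⟩
          subst x4
          exact ⟨rfl, x1, x2, x3⟩
        · rintro ⟨x4, x1, x2, x3⟩
          subst x4
          exact ⟨x1, x2, x3, rfl⟩
      rw [Finset.sum_congr rfl fun a _ =>
        (if_congr (hiff a) rfl rfl).trans (ite_and (β b = a) _ _ _)]
      exact sum_ite_force (β b) _
    have hpt : ∀ b : Fin m, (1:ℤ)
        ≤ (if ¬b=β b ∧ ¬γ⁻¹ (β b)=β b ∧ ¬γ⁻¹ (β b)=α b then (1:ℤ) else 0)
          + (if β b = b then (1:ℤ) else 0)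
          + (if γ⁻¹ (β b) = β b then (1:ℤ) else 0)
          + (if γ⁻¹ (β b) = α b then (1:ℤ) else 0) := by
      intro b
      by_cases p1 : β b = b <;> by_cases p2 : γ⁻¹ (β b) = β b <;>
        by_cases p3 : γ⁻¹ (β b) = α b
      · rw [if_neg (fun h => h.1 p1.symm), if_pos p1, if_pos p2, if_pos p3]; norm_num
      · rw [if_neg (fun h => h.1 p1.symm), if_pos p1, if_pos p2, if_neg p3]; norm_num
      · rw [if_neg (fun h => h.1 p1.symm), if_pos p1, if_neg p2, if_pos p3]; norm_num
      · rw [if_neg (fun h => h.1 p1.symm), if_pos p1, if_neg p2, if_neg p3]; norm_num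
      · rw [if_neg (fun h => h.2.1 p2), if_neg p1, if_pos p2, if_pos p3]; norm_num
      · rw [if_neg (fun h => h.2.1 p2), if_neg p1, if_pos p2, if_neg p3]; norm_num
      · rw [if_neg (fun h => h.2.2 p3), if_neg p1, if_neg p2, if_pos p3]; norm_num
      · rw [if_pos ⟨fun hh => p1 hh.symm, p2, p3⟩, if_neg p1, if_neg p2, if_neg p3]; norm_num
    have hsum := Finset.sum_le_sum (s := (Finset.univ : Finset (Fin m)))
      (fun b _ => hpt b)
    have hL : (∑ _b : Fin m, (1:ℤ)) = (m:ℤ) := by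
      rw [Finset.sum_const, Finset.card_univ, Fintype.card_fin, nsmul_eq_mul, mul_one]
    rw [hL] at hsum
    have hR : (∑ b : Fin m,
        ((if ¬b=β b ∧ ¬γ⁻¹ (β b)=β b ∧ ¬γ⁻¹ (β b)=α b then (1:ℤ) else 0)
          + (if β b = b then (1:ℤ) else 0)
          + (if γ⁻¹ (β b) = β b then (1:ℤ) else 0)
          + (if γ⁻¹ (β b) = α b then (1:ℤ) else 0)))
        = (∑ b : Fin m, if ¬b=β b ∧ ¬γ⁻¹ (β b)=β b ∧ ¬γ⁻¹ (β b)=α b then (1:ℤ) else 0)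
          + fpc β + fpc γ
          + (∑ b : Fin m, if γ⁻¹ (β b) = α b then (1:ℤ) else 0) := by
      simp only [Finset.sum_add_distrib]
      have hγ : (∑ b : Fin m, if γ⁻¹ (β b) = β b then (1:ℤ) else 0) = fpc γ :=
        calc (∑ b : Fin m, if γ⁻¹ (β b) = β b then (1:ℤ) else 0)
            = ∑ y : Fin m, (if γ⁻¹ y = y then (1:ℤ) else 0) :=
              Equiv.sum_comp β (fun y => if γ⁻¹ y = y then (1:ℤ) else 0)
          _ = fpc γ⁻¹ := rfl
          _ = fpc γ := fpc_inv γ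
      rw [hγ]
      rfl
    rw [hR] at hsum
    have hDD : (∑ a : Fin m, ∑ b : Fin m, ∑ c : Fin m,
        if (¬b=a ∧ ¬c=a ∧ ¬c=α b) ∧ (a = β b ∧ a = γ c) then (1:ℤ) else 0)
        = (∑ b : Fin m, if ¬b=β b ∧ ¬γ⁻¹ (β b)=β b ∧ ¬γ⁻¹ (β b)=α b then (1:ℤ) else 0) := by
      rw [Finset.sum_congr rfl fun a _ => Finset.sum_congr rfl fun b _ => h1 a b,
        Finset.sum_comm]
      exact Finset.sum_congr rfl fun b _ => h2 b
    rw [hDD]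
    exact hsum
  -- final assembly
  have hW0 : (0:ℤ) ≤ (∑ b : Fin m, if γ⁻¹ (β b) = α b then (1:ℤ) else 0) := by
    refine Finset.sum_nonneg fun b _ => ?_
    split <;> norm_num
  have hm3 : (0:ℤ) ≤ (m:ℤ) - 3 := by linarith
  have hWm := mul_nonneg hm3 hW0
  have hkey := key_ineq hm hodd α β γ
  rw [htot, hS0]
  nlinarith [hA, hB, hC3, hD, hkey, hWm]

private lemma card_eq_quadsum (α β γ : Equiv.Perm (Fin m)) :
    ((Finset.univ.filter (fun p : Fin m × Fin m × Fin m × Fin m =>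
        p.2.1 ≠ p.1 ∧ p.2.2.1 ≠ p.1 ∧ p.2.2.2 ≠ p.1 ∧
        p.2.2.1 ≠ α p.2.1 ∧ p.2.2.2 ≠ β p.2.1 ∧ p.2.2.2 ≠ γ p.2.2.1)).card : ℤ)
      = ∑ a : Fin m, ∑ b : Fin m, ∑ c : Fin m, ∑ d : Fin m,
        if ¬b=a ∧ ¬c=a ∧ ¬d=a ∧ ¬c=α b ∧ ¬d=β b ∧ ¬d=γ c then (1:ℤ) else 0 := by
  rw [Finset.card_filter]
  push_cast
  rw [Fintype.sum_prod_type]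
  refine Finset.sum_congr rfl fun a _ => ?_
  rw [Fintype.sum_prod_type]
  refine Finset.sum_congr rfl fun b _ => ?_
  rw [Fintype.sum_prod_type]

/-- For odd `m ≥ 7` and any six permutations `σᵢⱼ` (`1 ≤ i < j ≤ 4`) of `{1,…,m}`,
the number of `(x₁,x₂,x₃,x₄) ∈ {1,…,m}⁴` with `xⱼ ≠ σᵢⱼ xᵢ` for all `i < j`
is at most `m⁴ - 6m³ + 15m² - 13m - 3`. -/
theorem dual_DP_K4_odd_upper_bound
    (m : ℕ) (hm : 7 ≤ m) (hodd : Odd m)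
    (σ12 σ13 σ14 σ23 σ24 σ34 : Equiv.Perm (Fin m)) :
    ((Finset.univ.filter (fun p : Fin m × Fin m × Fin m × Fin m =>
        p.2.1 ≠ σ12 p.1 ∧ p.2.2.1 ≠ σ13 p.1 ∧ p.2.2.2 ≠ σ14 p.1 ∧
        p.2.2.1 ≠ σ23 p.2.1 ∧ p.2.2.2 ≠ σ24 p.2.1 ∧ p.2.2.2 ≠ σ34 p.2.2.1)).card : ℤ)
      ≤ (m : ℤ) ^ 4 - 6 * (m : ℤ) ^ 3 + 15 * (m : ℤ) ^ 2 - 13 * m - 3 := by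
  classical
  set α : Equiv.Perm (Fin m) := σ13⁻¹ * (σ23 * σ12) with hα
  set β : Equiv.Perm (Fin m) := σ14⁻¹ * (σ24 * σ12) with hβ
  set γ : Equiv.Perm (Fin m) := σ14⁻¹ * (σ34 * σ13) with hγ
  have hcard : ((Finset.univ.filter (fun p : Fin m × Fin m × Fin m × Fin m =>
      p.2.1 ≠ σ12 p.1 ∧ p.2.2.1 ≠ σ13 p.1 ∧ p.2.2.2 ≠ σ14 p.1 ∧
      p.2.2.1 ≠ σ23 p.2.1 ∧ p.2.2.2 ≠ σ24 p.2.1 ∧ p.2.2.2 ≠ σ34 p.2.2.1)).card)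
      = ((Finset.univ.filter (fun p : Fin m × Fin m × Fin m × Fin m =>
      p.2.1 ≠ p.1 ∧ p.2.2.1 ≠ p.1 ∧ p.2.2.2 ≠ p.1 ∧
      p.2.2.1 ≠ α p.2.1 ∧ p.2.2.2 ≠ β p.2.1 ∧ p.2.2.2 ≠ γ p.2.2.1)).card) := by
    refine (Finset.card_equiv
      ((Equiv.refl (Fin m)).prodCongr (σ12.prodCongr (σ13.prodCongr σ14))) ?_).symm
    rintro ⟨a, b, c, d⟩
    simp only [Finset.mem_filter, Finset.mem_univ, true_and, Equiv.prodCongr_apply,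
      Equiv.coe_refl, Prod.map, id_eq, ne_eq, hα, hβ, hγ, Equiv.Perm.mul_apply,
      EmbeddingLike.apply_eq_iff_eq, Equiv.Perm.eq_inv_iff_eq]
  rw [hcard, card_eq_quadsum α β γ]
  exact reduced_bound hm hodd α β γ
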